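/- If MPVC-MFCQ holds at a feasible point x* ∈ C, then MPVC-GMFCQ holds at x*. -/

import Mathlib

open Filter Topology
/-- The MPVC feasible set. -/
def feasSet {n m l q : ℕ} (g : Fin m → (Fin n → ℝ) → ℝ) (h : Fin l → (Fin n → ℝ) → ℝ)
    (G H : Fin q → (Fin n → ℝ) → ℝ) : Set (Fin n → ℝ) :=
  {x | (∀ i, g i x ≤ 0) ∧ (∀ j, h j x = 0) ∧ (∀ i, 0 ≤ H i x) ∧ (∀ i, G i x * H i x ≤ 0)}

/-- MPVC-MFCQ at a feasible point: the gradients `∇h_j (all j), ∇H_i (i ∈ I_{0+} ∪ I_{00})`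
are linearly independent and there is a direction `d` with
`∇h_jᵀd = 0`, `∇H_iᵀd = 0 (i ∈ I_{0+} ∪ I_{00})`, `∇g_iᵀd < 0 (i ∈ I_g)`,
`∇H_iᵀd > 0 (i ∈ I_{0-})`, `∇G_iᵀd < 0 (i ∈ I_{+0} ∪ I_{00})`. -/
def MPVC_MFCQ {n m l q : ℕ} (g : Fin m → (Fin n → ℝ) → ℝ) (h : Fin l → (Fin n → ℝ) → ℝ)
    (G H : Fin q → (Fin n → ℝ) → ℝ) (xs : Fin n → ℝ) : Prop :=
  LinearIndependent ℝ
    (fun idx : Fin l ⊕ {i : Fin q // H i xs = 0 ∧ 0 ≤ G i xs} =>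
      Sum.elim (fun j => fderiv ℝ (h j) xs) (fun i => fderiv ℝ (H i.1) xs) idx)
  ∧ ∃ d : Fin n → ℝ,
      (∀ j, fderiv ℝ (h j) xs d = 0)
      ∧ (∀ i : Fin q, H i xs = 0 ∧ 0 ≤ G i xs → fderiv ℝ (H i) xs d = 0)
      ∧ (∀ i : Fin m, g i xs = 0 → fderiv ℝ (g i) xs d < 0)
      ∧ (∀ i : Fin q, H i xs = 0 ∧ G i xs < 0 → 0 < fderiv ℝ (H i) xs d)
      ∧ (∀ i : Fin q, (0 < H i xs ∧ G i xs = 0) ∨ (H i xs = 0 ∧ G i xs = 0) →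
          fderiv ℝ (G i) xs d < 0)



/-- Conditions (i)–(ii) on an MPVC multiplier `(lam, mu, etaG, etaH)` at a feasible point. -/
def MultCond {n m l q : ℕ} (g : Fin m → (Fin n → ℝ) → ℝ) (h : Fin l → (Fin n → ℝ) → ℝ)
    (G H : Fin q → (Fin n → ℝ) → ℝ) (xs : Fin n → ℝ)
    (lam : Fin m → ℝ) (mu : Fin l → ℝ) (etaG etaH : Fin q → ℝ) : Prop :=
  ((∑ i, lam i • fderiv ℝ (g i) xs) + (∑ j, mu j • fderiv ℝ (h j) xs)
      + (∑ i, etaG i • fderiv ℝ (G i) xs) - (∑ i, etaH i • fderiv ℝ (H i) xs) = 0)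
  ∧ (∀ i, g i xs = 0 → 0 ≤ lam i)
  ∧ (∀ i, g i xs ≠ 0 → lam i = 0)
  ∧ (∀ i, (0 < H i xs ∧ G i xs < 0) ∨ (H i xs = 0 ∧ G i xs < 0) ∨ (H i xs = 0 ∧ 0 < G i xs) →
      etaG i = 0)
  ∧ (∀ i, (0 < H i xs ∧ G i xs = 0) ∨ (H i xs = 0 ∧ G i xs = 0) → 0 ≤ etaG i)
  ∧ (∀ i, 0 < H i xs → etaH i = 0)
  ∧ (∀ i, H i xs = 0 ∧ G i xs < 0 → 0 ≤ etaH i)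
  ∧ (∀ i, H i xs = 0 ∧ G i xs = 0 → etaH i * etaG i = 0)

/-- MPVC-GMFCQ at a feasible point: the only multiplier satisfying conditions (i)–(ii) is zero. -/
def MPVC_GMFCQ {n m l q : ℕ} (g : Fin m → (Fin n → ℝ) → ℝ) (h : Fin l → (Fin n → ℝ) → ℝ)
    (G H : Fin q → (Fin n → ℝ) → ℝ) (xs : Fin n → ℝ) : Prop :=
  ∀ (lam : Fin m → ℝ) (mu : Fin l → ℝ) (etaG etaH : Fin q → ℝ),
    MultCond g h G H xs lam mu etaG etaH → lam = 0 ∧ mu = 0 ∧ etaG = 0 ∧ etaH = 0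

/-- MPVC-MFCQ at a feasible point implies MPVC-GMFCQ there. -/
theorem GMFCQ_of_MFCQ {n m l q : ℕ}
    (g : Fin m → (Fin n → ℝ) → ℝ) (h : Fin l → (Fin n → ℝ) → ℝ)
    (G H : Fin q → (Fin n → ℝ) → ℝ)
    (hg : ∀ i, ContDiff ℝ 1 (g i)) (hh : ∀ j, ContDiff ℝ 1 (h j))
    (hG : ∀ i, ContDiff ℝ 1 (G i)) (hH : ∀ i, ContDiff ℝ 1 (H i))
    (xs : Fin n → ℝ) (hxs : xs ∈ feasSet g h G H)
    (hmfcq : MPVC_MFCQ g h G H xs) :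
    MPVC_GMFCQ g h G H xs := by
  classical
  obtain ⟨hli, d, hdh, hdH0, hdg, hdHneg, hdG⟩ := hmfcq
  obtain ⟨hg0, hh0, hH0, hGH0⟩ := hxs
  intro lam mu etaG etaH hmc
  obtain ⟨heq, hlam_nn, hlam0, hG0, hGnn, hHz, hHnn, hcomp⟩ := hmc
  have tri : ∀ i : Fin q, 0 < H i xs ∨ (H i xs = 0 ∧ G i xs < 0) ∨ (H i xs = 0 ∧ 0 ≤ G i xs) := by
    intro i
    rcases lt_or_eq_of_le (hH0 i) with hp | he
    · exact Or.inl hp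
    · rcases lt_or_ge (G i xs) 0 with hGi | hGi
      · exact Or.inr (Or.inl ⟨he.symm, hGi⟩)
      · exact Or.inr (Or.inr ⟨he.symm, hGi⟩)
  have heqd : (∑ i, lam i * fderiv ℝ (g i) xs d)
      + (∑ i, etaG i * fderiv ℝ (G i) xs d) - (∑ i, etaH i * fderiv ℝ (H i) xs d) = 0 := by
    have h1 := congrArg (fun L : (Fin n → ℝ) →L[ℝ] ℝ => L d) heq
    simp only [ContinuousLinearMap.sub_apply, ContinuousLinearMap.add_apply,
      ContinuousLinearMap.coe_sum', Finset.sum_apply, ContinuousLinearMap.coe_smul',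
      Pi.smul_apply, smul_eq_mul, ContinuousLinearMap.zero_apply] at h1
    have h2 : (∑ j, mu j * fderiv ℝ (h j) xs d) = 0 :=
      Finset.sum_eq_zero fun j _ => by rw [hdh j, mul_zero]
    rw [h2] at h1
    linarith
  have hSg : ∀ i, lam i * fderiv ℝ (g i) xs d ≤ 0 := by
    intro i
    by_cases hgi : g i xs = 0
    · exact mul_nonpos_of_nonneg_of_nonpos (hlam_nn i hgi) (le_of_lt (hdg i hgi))
    · simp [hlam0 i hgi]
  have hSG : ∀ i, etaG i * fderiv ℝ (G i) xs d ≤ 0 := by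
    intro i
    rcases tri i with hp | ⟨he, hGi⟩ | ⟨he, hGi⟩
    · have hGle : G i xs ≤ 0 := by nlinarith [hGH0 i]
      rcases lt_or_eq_of_le hGle with hGlt | hGeq
      · simp [hG0 i (Or.inl ⟨hp, hGlt⟩)]
      · exact mul_nonpos_of_nonneg_of_nonpos (hGnn i (Or.inl ⟨hp, hGeq⟩))
          (le_of_lt (hdG i (Or.inl ⟨hp, hGeq⟩)))
    · simp [hG0 i (Or.inr (Or.inl ⟨he, hGi⟩))]
    · rcases lt_or_eq_of_le hGi with hGlt | hGeq
      · simp [hG0 i (Or.inr (Or.inr ⟨he, hGlt⟩))]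
      · exact mul_nonpos_of_nonneg_of_nonpos (hGnn i (Or.inr ⟨he, hGeq.symm⟩))
          (le_of_lt (hdG i (Or.inr ⟨he, hGeq.symm⟩)))
  have hSH : ∀ i, 0 ≤ etaH i * fderiv ℝ (H i) xs d := by
    intro i
    rcases tri i with hp | ⟨he, hGi⟩ | ⟨he, hGi⟩
    · simp [hHz i hp]
    · exact mul_nonneg (hHnn i ⟨he, hGi⟩) (le_of_lt (hdHneg i ⟨he, hGi⟩))
    · rw [hdH0 i ⟨he, hGi⟩, mul_zero]
  have hA : ∑ i, lam i * fderiv ℝ (g i) xs d ≤ 0 := Finset.sum_nonpos fun i _ => hSg i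
  have hC : ∑ i, etaG i * fderiv ℝ (G i) xs d ≤ 0 := Finset.sum_nonpos fun i _ => hSG i
  have hE : 0 ≤ ∑ i, etaH i * fderiv ℝ (H i) xs d := Finset.sum_nonneg fun i _ => hSH i
  have hA0 : ∑ i, lam i * fderiv ℝ (g i) xs d = 0 := by linarith
  have hC0 : ∑ i, etaG i * fderiv ℝ (G i) xs d = 0 := by linarith
  have hE0 : ∑ i, etaH i * fderiv ℝ (H i) xs d = 0 := by linarith
  have htg : ∀ i ∈ Finset.univ, lam i * fderiv ℝ (g i) xs d = 0 :=
    (Finset.sum_eq_zero_iff_of_nonpos fun i _ => hSg i).mp hA0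
  have htG : ∀ i ∈ Finset.univ, etaG i * fderiv ℝ (G i) xs d = 0 :=
    (Finset.sum_eq_zero_iff_of_nonpos fun i _ => hSG i).mp hC0
  have htH : ∀ i ∈ Finset.univ, etaH i * fderiv ℝ (H i) xs d = 0 :=
    (Finset.sum_eq_zero_iff_of_nonneg fun i _ => hSH i).mp hE0
  have hlamz : lam = 0 := by
    funext i
    by_cases hgi : g i xs = 0
    · rcases mul_eq_zero.mp (htg i (Finset.mem_univ i)) with h' | h'
      · exact h'
      · exact absurd h' (ne_of_lt (hdg i hgi))
    · exact hlam0 i hgi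
  have hetaGz : etaG = 0 := by
    funext i
    rcases tri i with hp | ⟨he, hGi⟩ | ⟨he, hGi⟩
    · have hGle : G i xs ≤ 0 := by nlinarith [hGH0 i]
      rcases lt_or_eq_of_le hGle with hGlt | hGeq
      · exact hG0 i (Or.inl ⟨hp, hGlt⟩)
      · rcases mul_eq_zero.mp (htG i (Finset.mem_univ i)) with h' | h'
        · exact h'
        · exact absurd h' (ne_of_lt (hdG i (Or.inl ⟨hp, hGeq⟩)))
    · exact hG0 i (Or.inr (Or.inl ⟨he, hGi⟩))
    · rcases lt_or_eq_of_le hGi with hGlt | hGeq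
      · exact hG0 i (Or.inr (Or.inr ⟨he, hGlt⟩))
      · rcases mul_eq_zero.mp (htG i (Finset.mem_univ i)) with h' | h'
        · exact h'
        · exact absurd h' (ne_of_lt (hdG i (Or.inr ⟨he, hGeq.symm⟩)))
  -- reduced equation
  have heq2 : (∑ j, mu j • fderiv ℝ (h j) xs) - (∑ i, etaH i • fderiv ℝ (H i) xs) = 0 := by
    have hz1 : (∑ i, lam i • fderiv ℝ (g i) xs) = 0 :=
      Finset.sum_eq_zero fun i _ => by rw [show lam i = 0 from congrFun hlamz i, zero_smul]
    have hz2 : (∑ i, etaG i • fderiv ℝ (G i) xs) = 0 :=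
      Finset.sum_eq_zero fun i _ => by rw [show etaG i = 0 from congrFun hetaGz i, zero_smul]
    rw [hz1, hz2] at heq
    rw [← heq]; abel
  have hEsub : (∑ i, etaH i • fderiv ℝ (H i) xs)
      = ∑ i : {i : Fin q // H i xs = 0 ∧ 0 ≤ G i xs}, etaH i.1 • fderiv ℝ (H i.1) xs := by
    rw [← Finset.sum_subtype (Finset.univ.filter fun i : Fin q => H i xs = 0 ∧ 0 ≤ G i xs)
      (fun i => by simp) (fun i => etaH i • fderiv ℝ (H i) xs)]
    refine (Finset.sum_filter_of_ne ?_).symm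
    intro i _ hne
    rcases tri i with hp | ⟨he, hGi⟩ | ⟨he, hGi⟩
    · exact absurd (by rw [hHz i hp, zero_smul]) hne
    · have : etaH i = 0 := by
        rcases mul_eq_zero.mp (htH i (Finset.mem_univ i)) with h' | h'
        · exact h'
        · exact absurd h' (ne_of_gt (hdHneg i ⟨he, hGi⟩))
      exact absurd (by rw [this, zero_smul]) hne
    · exact ⟨he, hGi⟩
  have hsum : ∑ idx : Fin l ⊕ {i : Fin q // H i xs = 0 ∧ 0 ≤ G i xs},
      Sum.elim mu (fun i => -etaH i.1) idx •
        Sum.elim (fun j => fderiv ℝ (h j) xs) (fun i => fderiv ℝ (H i.1) xs) idx = 0 := by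
    rw [Fintype.sum_sum_type]
    simp only [Sum.elim_inl, Sum.elim_inr, neg_smul, Finset.sum_neg_distrib]
    rw [hEsub, sub_eq_add_neg, ← Finset.sum_neg_distrib] at heq2
    convert heq2 using 2
    refine Finset.sum_congr rfl fun i _ => ?_
    ext v
    simp
  have hliz := Fintype.linearIndependent_iff.mp hli (Sum.elim mu (fun i => -etaH i.1)) hsum
  have hmuz : mu = 0 := funext fun j => hliz (Sum.inl j)
  have hetaHz : etaH = 0 := by
    funext i
    rcases tri i with hp | ⟨he, hGi⟩ | ⟨he, hGi⟩
    · exact hHz i hp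
    · rcases mul_eq_zero.mp (htH i (Finset.mem_univ i)) with h' | h'
      · exact h'
      · exact absurd h' (ne_of_gt (hdHneg i ⟨he, hGi⟩))
    · have := hliz (Sum.inr ⟨i, he, hGi⟩)
      simpa using this
  exact ⟨hlamz, hmuz, hetaGz, hetaHz⟩
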